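/- arXiv:2001.08733 — 3 statements merged into one kernel-verified Lean document; each statement's English description precedes it below -/
import Mathlib

section
/- Let Γ : ℝ → ℝ be C¹ with a finite limit lim_{t→+∞} Γ'(t) t^m for some m > 1, let 0 < α ≤ m - 1, and let h(s) = s/(1-s)^{1/α} on [0,1) with inverse g. Then the limit as t → +∞ of Γ'(t)/g'(t) exists, i.e., the function s ↦ Γ(h(s)) extends to a continuously differentiable function on [0,1]. -/
open Real Filter Set Topology

theorem stmt16 (Γ : ℝ → ℝ) (hΓ : ContDiff ℝ 1 Γ) (m : ℝ) (hm : 1 < m)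
    (L : ℝ) (hL : Tendsto (fun t => deriv Γ t * t ^ m) atTop (nhds L))
    (α : ℝ) (hα : 0 < α) (hαm : α ≤ m - 1)
    (h g : ℝ → ℝ) (hh : ∀ s, h s = s / (1 - s) ^ (1 / α))
    (hgh : ∀ t ≥ (0 : ℝ), h (g t) = t)
    (hhg : ∀ s ∈ Set.Ico (0 : ℝ) 1, g (h s) = s) :
    ∃ M : ℝ, Tendsto (fun t => deriv Γ t / deriv g t) atTop (nhds M) := by
  have hα1 : (0:ℝ) < 1/α := by positivity
  set H : ℝ → ℝ := fun s => (1 - s) ^ (-(1/α)) + s * ((1/α) * (1 - s) ^ (-(1/α) - 1))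
    with hHdef
  -- derivative of h on (-∞, 1)
  have hderiv : ∀ s : ℝ, s < 1 → HasDerivAt h (H s) s := by
    intro s hs
    have h1s : 0 < 1 - s := by linarith
    have d1 : HasDerivAt (fun x : ℝ => 1 - x) (-1) s := by
      simpa using (hasDerivAt_id s).const_sub 1
    have d2 : HasDerivAt (fun x : ℝ => (1 - x) ^ (-(1/α)))
        (-(1/α) * (1 - s) ^ (-(1/α) - 1) * (-1)) s :=
      (Real.hasDerivAt_rpow_const (p := -(1/α)) (Or.inl h1s.ne')).comp s d1
    have d3 : HasDerivAt (fun x : ℝ => x * (1 - x) ^ (-(1/α)))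
        (1 * (1 - s) ^ (-(1/α)) + s * (-(1/α) * (1 - s) ^ (-(1/α) - 1) * (-1))) s :=
      (hasDerivAt_id s).mul d2
    have heq : (fun x : ℝ => x * (1 - x) ^ (-(1/α))) =ᶠ[𝓝 s] h := by
      filter_upwards [isOpen_Iio.eventually_mem (show s ∈ Iio 1 from hs)] with x hx
      rw [hh x, Real.rpow_neg (by simp only [mem_Iio] at hx; linarith)]
      exact (div_eq_mul_inv _ _).symm
    have := d3.congr_of_eventuallyEq heq.symm
    refine this.congr_deriv ?_
    simp only [hHdef]
    ring
  -- positivity of H on [0,1)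
  have hHpos : ∀ s ∈ Ico (0:ℝ) 1, 0 < H s := by
    intro s hs
    have h1s : 0 < 1 - s := by linarith [hs.2]
    have t1 : 0 < (1 - s) ^ (-(1/α)) := Real.rpow_pos_of_pos h1s _
    have t2 : 0 ≤ s * ((1/α) * (1 - s) ^ (-(1/α) - 1)) := by
      have := Real.rpow_pos_of_pos h1s (-(1/α) - 1)
      have := hs.1
      positivity
    simp only [hHdef]
    linarith
  -- h is strictly monotone on [0,1)
  have hmono : StrictMonoOn h (Ico (0:ℝ) 1) := by
    apply strictMonoOn_of_deriv_pos (convex_Ico 0 1)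
    · exact fun s hs => ((hderiv s hs.2).continuousAt).continuousWithinAt
    · intro s hs
      rw [interior_Ico] at hs
      rw [(hderiv s hs.2).deriv]
      exact hHpos s ⟨hs.1.le, hs.2⟩
  have h0 : h 0 = 0 := by rw [hh]; simp
  -- h tends to +∞ at 1⁻
  have htop : Tendsto h (𝓝[<] (1:ℝ)) atTop := by
    have hden : Tendsto (fun s : ℝ => (1 - s) ^ (1/α)) (𝓝[<] (1:ℝ)) (𝓝[>] 0) := by
      rw [tendsto_nhdsWithin_iff]
      constructor
      · have hc : ContinuousAt (fun s : ℝ => (1 - s) ^ (1/α)) 1 := by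
          have : ContinuousAt (fun x : ℝ => x ^ (1/α)) (1 - 1) := by
            simp only [sub_self]
            exact Real.continuousAt_rpow_const 0 (1/α) (Or.inr hα1.le)
          exact this.comp (by fun_prop)
        have := hc.tendsto.mono_left (nhdsWithin_le_nhds (s := Iio (1:ℝ)))
        simpa [Real.zero_rpow hα1.ne', Real.zero_rpow (show α⁻¹ ≠ 0 by positivity)] using this
      · filter_upwards [self_mem_nhdsWithin] with s hs
        exact Real.rpow_pos_of_pos (by simp only [mem_Iio] at hs; linarith) _
    have hinv : Tendsto (fun s : ℝ => ((1 - s) ^ (1/α))⁻¹) (𝓝[<] (1:ℝ)) atTop :=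
      tendsto_inv_nhdsGT_zero.comp hden
    have hnum : Tendsto (fun s : ℝ => s) (𝓝[<] (1:ℝ)) (𝓝 1) :=
      tendsto_id.mono_left nhdsWithin_le_nhds
    have := Filter.Tendsto.pos_mul_atTop one_pos hnum hinv
    apply this.congr
    intro s
    rw [hh]
    exact (div_eq_mul_inv _ _).symm
  -- surjectivity: every t ≥ 0 has a preimage in [0,1)
  have hsurj : ∀ t : ℝ, 0 ≤ t → ∃ s ∈ Ico (0:ℝ) 1, h s = t := by
    intro t ht
    have h1 : ∀ᶠ s in 𝓝[<] (1:ℝ), t < h s := htop.eventually_gt_atTop t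
    have h2 : ∀ᶠ s in 𝓝[<] (1:ℝ), 0 < s :=
      eventually_nhdsWithin_of_eventually_nhds (eventually_gt_nhds one_pos)
    have h3 : ∀ᶠ s in 𝓝[<] (1:ℝ), s < 1 := self_mem_nhdsWithin
    obtain ⟨s₀, hs₀t, hs₀0, hs₀1⟩ := (h1.and (h2.and h3)).exists
    have hcont : ContinuousOn h (Icc 0 s₀) := by
      intro x hx
      exact ((hderiv x (lt_of_le_of_lt hx.2 hs₀1)).continuousAt).continuousWithinAt
    have : t ∈ Icc (h 0) (h s₀) := by
      rw [h0]; exact ⟨ht, hs₀t.le⟩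
    obtain ⟨s, hsmem, hseq⟩ := intermediate_value_Icc hs₀0.le hcont this
    exact ⟨s, ⟨hsmem.1, lt_of_le_of_lt hsmem.2 hs₀1⟩, hseq⟩
  -- g is pinned on [0,∞)
  have hg_mem : ∀ t : ℝ, 0 ≤ t → g t ∈ Ico (0:ℝ) 1 := by
    intro t ht
    obtain ⟨s, hsmem, hseq⟩ := hsurj t ht
    have : g t = s := by rw [← hseq, hhg s hsmem]
    rw [this]; exact hsmem
  -- g tends to 1⁻ at +∞
  have gtendsto : Tendsto g atTop (𝓝[<] (1:ℝ)) := by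
    rw [tendsto_nhdsWithin_iff]
    constructor
    · rw [tendsto_order]
      constructor
      · intro b hb
        rcases lt_or_ge b 0 with hb0 | hb0
        · filter_upwards [eventually_ge_atTop (0:ℝ)] with t ht
          exact lt_of_lt_of_le hb0 (hg_mem t ht).1
        · filter_upwards [eventually_ge_atTop (0:ℝ), eventually_gt_atTop (h b)] with t ht0 htb
          by_contra hle
          push_neg at hle
          have : h (g t) ≤ h b :=
            hmono.monotoneOn (hg_mem t ht0) ⟨hb0, hb⟩ hle
          rw [hgh t ht0] at this
          linarith
      · intro b hb
        filter_upwards [eventually_ge_atTop (0:ℝ)] with t ht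
        exact lt_trans (hg_mem t ht).2 hb
    · filter_upwards [eventually_ge_atTop (0:ℝ)] with t ht
      exact (hg_mem t ht).2
  -- g is positive on (0,∞)
  have hgpos : ∀ t : ℝ, 0 < t → 0 < g t := by
    intro t ht
    rcases (hg_mem t ht.le).1.eq_or_lt with he | hl
    · exfalso
      have := hgh t ht.le
      rw [← he, h0] at this
      linarith
    · exact hl
  -- continuity of g on (0,∞)
  have hgcont : ∀ t : ℝ, 0 < t → ContinuousAt g t := by
    intro t ht
    have hmem := hg_mem t ht.le
    have hht := hgh t ht.le
    have hs0 : 0 < g t := hgpos t ht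
    rw [Metric.continuousAt_iff]
    intro ε hε
    obtain ⟨s₁, hs₁l, hs₁r⟩ : ∃ s₁, max 0 (g t - ε) < s₁ ∧ s₁ < g t :=
      exists_between (max_lt hs0 (by linarith))
    obtain ⟨s₂, hs₂l, hs₂r⟩ : ∃ s₂, g t < s₂ ∧ s₂ < min 1 (g t + ε) :=
      exists_between (lt_min hmem.2 (by linarith))
    have hs₁m : s₁ ∈ Ico (0:ℝ) 1 :=
      ⟨le_of_lt (lt_of_le_of_lt (le_max_left _ _) hs₁l), hs₁r.trans hmem.2⟩
    have hs₂m : s₂ ∈ Ico (0:ℝ) 1 :=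
      ⟨hmem.1.trans hs₂l.le, lt_of_lt_of_le hs₂r (min_le_left _ _)⟩
    have h1 : h s₁ < t := by rw [← hht]; exact hmono hs₁m hmem hs₁r
    have h2 : t < h s₂ := by rw [← hht]; exact hmono hmem hs₂m hs₂l
    refine ⟨min (t - h s₁) (h s₂ - t), by simp [h1, h2], ?_⟩
    intro u hu
    rw [Real.dist_eq] at hu
    have hu1 : h s₁ < u := by
      have := abs_lt.1 (lt_of_lt_of_le hu (min_le_left _ _))
      linarith [this.1]
    have hu2 : u < h s₂ := by
      have := abs_lt.1 (lt_of_lt_of_le hu (min_le_right _ _))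
      linarith [this.2]
    have hhs₁ : 0 ≤ h s₁ := by
      rw [← h0]
      exact hmono.monotoneOn (left_mem_Ico.2 one_pos) hs₁m hs₁m.1
    have hu0 : 0 ≤ u := hhs₁.trans hu1.le
    have humem := hg_mem u hu0
    have huh := hgh u hu0
    have hl : s₁ < g u := by
      by_contra hle
      push_neg at hle
      have : h (g u) ≤ h s₁ := hmono.monotoneOn humem hs₁m hle
      rw [huh] at this; linarith
    have hr : g u < s₂ := by
      by_contra hle
      push_neg at hle
      have : h s₂ ≤ h (g u) := hmono.monotoneOn hs₂m humem hle
      rw [huh] at this; linarith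
    rw [Real.dist_eq, abs_lt]
    constructor
    · have : g t - ε ≤ max 0 (g t - ε) := le_max_right _ _
      linarith
    · have : min 1 (g t + ε) ≤ g t + ε := min_le_right _ _
      linarith
  -- derivative of g on (0,∞)
  have hgderiv : ∀ t : ℝ, 0 < t → HasDerivAt g ((H (g t))⁻¹) t := by
    intro t ht
    refine HasDerivAt.of_local_left_inverse (hgcont t ht)
      (hderiv (g t) (hg_mem t ht.le).2) (ne_of_gt (hHpos _ (hg_mem t ht.le))) ?_
    filter_upwards [isOpen_Ioi.eventually_mem (show t ∈ Ioi (0:ℝ) from ht)] with u hu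
    exact hgh u (le_of_lt hu)
  -- the limit constant
  set β : ℝ := (m - 1)/α - 1 with hβdef
  have hβ0 : 0 ≤ β := by
    rw [hβdef, sub_nonneg, le_div_iff₀ hα]
    linarith
  refine ⟨L * ((0:ℝ) ^ β * (1/α)), ?_⟩
  -- limit of H s / (h s)^m as s → 1⁻
  have hφ : Tendsto (fun s => H s / (h s) ^ m) (𝓝[<] (1:ℝ))
      (𝓝 ((0:ℝ) ^ β * (1/α))) := by
    have l1 : Tendsto (fun s : ℝ => (1 - s) ^ β) (𝓝[<] (1:ℝ)) (𝓝 ((0:ℝ) ^ β)) := by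
      have hc : ContinuousAt (fun x : ℝ => x ^ β) (0:ℝ) :=
        Real.continuousAt_rpow_const 0 β (Or.inr hβ0)
      have hc' : ContinuousAt (fun x : ℝ => x ^ β) ((1:ℝ) - 1) := by
        rw [sub_self]; exact hc
      have hcc : ContinuousAt (fun s : ℝ => (1 - s) ^ β) 1 :=
        hc'.comp (by fun_prop)
      have := hcc.tendsto.mono_left (nhdsWithin_le_nhds (s := Iio (1:ℝ)))
      simpa using this
    have l2 : Tendsto (fun s : ℝ => ((1 - s) + s * (1/α)) / s ^ m) (𝓝[<] (1:ℝ))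
        (𝓝 (1/α)) := by
      have hc1 : ContinuousAt (fun s : ℝ => (1 - s) + s * (1/α)) 1 := by fun_prop
      have hc2 : ContinuousAt (fun s : ℝ => s ^ m) 1 :=
        Real.continuousAt_rpow_const 1 m (Or.inl one_ne_zero)
      have hc : ContinuousAt (fun s : ℝ => ((1 - s) + s * (1/α)) / s ^ m) 1 := by
        apply hc1.div hc2
        simp [Real.one_rpow]
      have := hc.tendsto.mono_left (nhdsWithin_le_nhds (s := Iio (1:ℝ)))
      simpa [Real.one_rpow] using this
    have lmul := l1.mul l2
    apply lmul.congr'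
    have hev : ∀ᶠ s in 𝓝[<] (1:ℝ), s ∈ Ioo (0:ℝ) 1 := by
      filter_upwards [self_mem_nhdsWithin,
        eventually_nhdsWithin_of_eventually_nhds (eventually_gt_nhds one_pos)] with s h1 h2
      exact ⟨h2, h1⟩
    filter_upwards [hev] with s hs
    have hs0 : 0 < s := hs.1
    have h1s : 0 < 1 - s := by linarith [hs.2]
    have e1 : H s = (1 - s) ^ (-(1/α) - 1) * ((1 - s) + s * (1/α)) := by
      have e : (1 - s) ^ (-(1/α)) = (1 - s) ^ (-(1/α) - 1) * (1 - s) := by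
        rw [← Real.rpow_add_one h1s.ne' (-(1/α) - 1)]
        ring_nf
      simp only [hHdef]
      rw [e]; ring
    have e2 : (h s) ^ m = s ^ m / (1 - s) ^ ((1/α) * m) := by
      rw [hh, Real.div_rpow hs0.le (Real.rpow_nonneg h1s.le _),
        ← Real.rpow_mul h1s.le]
    have e3 : (1 - s) ^ β = (1 - s) ^ (-(1/α) - 1) * (1 - s) ^ ((1/α) * m) := by
      rw [← Real.rpow_add h1s]
      congr 1
      rw [hβdef]
      field_simp
      ring
    rw [e1, e2, e3]
    have hne1 : (s:ℝ) ^ m ≠ 0 := (Real.rpow_pos_of_pos hs0 m).ne'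
    have hne2 : (1 - s) ^ ((1/α) * m) ≠ 0 := (Real.rpow_pos_of_pos h1s _).ne'
    field_simp
  -- compose with g
  have hcomp : Tendsto (fun t => H (g t) / t ^ m) atTop (𝓝 ((0:ℝ) ^ β * (1/α))) := by
    have := hφ.comp gtendsto
    apply this.congr'
    filter_upwards [eventually_ge_atTop (0:ℝ)] with t ht
    simp only [Function.comp_apply]
    rw [hgh t ht]
  -- final assembly
  have hfin := hL.mul hcomp
  apply hfin.congr'
  filter_upwards [eventually_gt_atTop (0:ℝ)] with t ht
  have hd : deriv g t = (H (g t))⁻¹ := (hgderiv t ht).deriv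
  have hHne : H (g t) ≠ 0 := ne_of_gt (hHpos _ (hg_mem t ht.le))
  have htm : (t:ℝ) ^ m ≠ 0 := (Real.rpow_pos_of_pos ht m).ne'
  rw [hd]
  field_simp
end

section
/- Consider the two-dimensional system ẏ = βy + f₁(y,ζ), ζ̇ = αζ + f₂(y,ζ) where 0 < α < β and f₁, f₂ are Lipschitz with Lipschitz constant ρ and f₁(0,0)=f₂(0,0)=0. If ρ < (β-α)/4, then along any two solutions (y₁,ζ₁), (y₂,ζ₂) remaining in the domain, if |y₁(0)-y₂(0)| ≥ |ζ₁(0)-ζ₂(0)| then |y₁(t)-y₂(t)| ≥ |ζ₁(t)-ζ₂(t)| for all t ≥ 0 for which both solutions are defined. -/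
open Real Filter Set Topology

/-- If `φ a ≤ 0` and `φ' ≤ K φ` whenever `φ ≥ 0`, then `φ ≤ 0` on `[a, b]`. -/
lemma nonpos_of_deriv_le_mul_of_nonneg {φ φ' : ℝ → ℝ} {K a b : ℝ}
    (hd : ∀ t ∈ Set.Icc a b, HasDerivAt φ (φ' t) t) (h0 : φ a ≤ 0)
    (hb : ∀ t ∈ Set.Icc a b, 0 ≤ φ t → φ' t ≤ K * φ t) :
    ∀ t ∈ Set.Icc a b, φ t ≤ 0 := by
  intro t₀ ht₀
  by_contra hpos
  push_neg at hpos
  have hcont : ContinuousOn φ (Set.Icc a b) := fun t ht =>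
    (hd t ht).continuousAt.continuousWithinAt
  set S : Set ℝ := {t | t ∈ Set.Icc a t₀ ∧ φ t ≤ 0} with hS
  have haS : a ∈ S := ⟨⟨le_refl a, ht₀.1⟩, h0⟩
  have hne : S.Nonempty := ⟨a, haS⟩
  have hbdd : BddAbove S := ⟨t₀, fun x hx => hx.1.2⟩
  have hsub : Set.Icc a t₀ ⊆ Set.Icc a b := Set.Icc_subset_Icc le_rfl ht₀.2
  have hclosed : IsClosed S := by
    have : S = Set.Icc a t₀ ∩ φ ⁻¹' Set.Iic 0 := by
      ext x; simp [hS, Set.mem_setOf_eq]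
    rw [this]
    exact (hcont.mono hsub).preimage_isClosed_of_isClosed isClosed_Icc isClosed_Iic
  set s := sSup S with hs_def
  have hsS : s ∈ S := hclosed.csSup_mem hne hbdd
  have hs_mem : s ∈ Set.Icc a t₀ := hsS.1
  have hφs : φ s ≤ 0 := hsS.2
  have hst : s < t₀ := by
    rcases lt_or_eq_of_le hs_mem.2 with h | h
    · exact h
    · exact absurd (h ▸ hφs) (not_le.2 hpos)
  have hs_memb : s ∈ Set.Icc a b := hsub hs_mem
  -- on (s, t₀], φ is nonnegative
  have hpos' : ∀ t ∈ Set.Ioc s t₀, 0 ≤ φ t := by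
    intro t ht
    by_contra hneg
    push_neg at hneg
    have : t ∈ S := ⟨⟨hs_mem.1.trans ht.1.le, ht.2⟩, hneg.le⟩
    exact absurd (le_csSup hbdd this) (not_le.2 ht.1)
  -- φ s = 0
  have hφs0 : φ s = 0 := by
    rcases lt_or_eq_of_le hφs with hlt | h
    · exfalso
      have hc : ContinuousAt φ s := (hd s hs_memb).continuousAt
      have h₁ : ∀ᶠ x in 𝓝 s, φ x < 0 := hc.eventually (Filter.Tendsto.eventually_lt_const hlt tendsto_id) |>.mono (fun x hx => hx)
      have h₂ : ∀ᶠ x in 𝓝[>] s, φ x < 0 := h₁.filter_mono nhdsWithin_le_nhds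
      have h₃ : ∀ᶠ x in 𝓝[>] s, x < t₀ :=
        eventually_nhdsWithin_of_eventually_nhds (Filter.Tendsto.eventually_lt_const hst tendsto_id)
      obtain ⟨x, hx1, hx2, hx3⟩ := (h₂.and (h₃.and self_mem_nhdsWithin)).exists
      exact absurd (hpos' x ⟨hx3, hx2.le⟩) (not_le.2 hx1)
    · exact h
  -- nonneg on Ico s t₀
  have hnn : ∀ x ∈ Set.Ico s t₀, 0 ≤ φ x := by
    intro x hx
    rcases eq_or_lt_of_le hx.1 with h | h
    · rw [← h]; exact hφs0.ge
    · exact hpos' x ⟨h, hx.2.le⟩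
  have hsub2 : Set.Icc s t₀ ⊆ Set.Icc a b :=
    Set.Icc_subset_Icc hs_mem.1 ht₀.2
  have hG := le_gronwallBound_of_liminf_deriv_right_le (f := φ) (f' := φ')
    (δ := 0) (K := K) (ε := 0) (a := s) (b := t₀)
    (hcont.mono hsub2)
    (fun x hx r hr => by
      have := (hd x (hsub2 ⟨hx.1, hx.2.le⟩)).hasDerivWithinAt (s := Set.Ici x)
      exact this.liminf_right_slope_le hr)
    (le_of_eq hφs0)
    (fun x hx => by
      have := hb x (hsub2 ⟨hx.1, hx.2.le⟩) (hnn x hx)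
      linarith)
  have := hG t₀ ⟨hst.le, le_refl t₀⟩
  rw [gronwallBound_ε0_δ0] at this
  exact absurd this (not_le.2 hpos)

theorem stmt17 (α β ρ T : ℝ) (hα : 0 < α) (hαβ : α < β) (hρ : 0 < ρ)
    (hρ4 : 4 * ρ < β - α)
    (f₁ f₂ : ℝ × ℝ → ℝ) (hf₁0 : f₁ (0, 0) = 0) (hf₂0 : f₂ (0, 0) = 0)
    (hf₁ : ∀ p q : ℝ × ℝ, |f₁ p - f₁ q| ≤ ρ * (|p.1 - q.1| + |p.2 - q.2|))
    (hf₂ : ∀ p q : ℝ × ℝ, |f₂ p - f₂ q| ≤ ρ * (|p.1 - q.1| + |p.2 - q.2|))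
    (y₁ ζ₁ y₂ ζ₂ : ℝ → ℝ)
    (hy₁ : ∀ t ∈ Set.Icc 0 T, HasDerivAt y₁ (β * y₁ t + f₁ (y₁ t, ζ₁ t)) t)
    (hζ₁ : ∀ t ∈ Set.Icc 0 T, HasDerivAt ζ₁ (α * ζ₁ t + f₂ (y₁ t, ζ₁ t)) t)
    (hy₂ : ∀ t ∈ Set.Icc 0 T, HasDerivAt y₂ (β * y₂ t + f₁ (y₂ t, ζ₂ t)) t)
    (hζ₂ : ∀ t ∈ Set.Icc 0 T, HasDerivAt ζ₂ (α * ζ₂ t + f₂ (y₂ t, ζ₂ t)) t)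
    (h0 : |ζ₁ 0 - ζ₂ 0| ≤ |y₁ 0 - y₂ 0|) :
    ∀ t ∈ Set.Icc 0 T, |ζ₁ t - ζ₂ t| ≤ |y₁ t - y₂ t| := by
  set u : ℝ → ℝ := fun t => y₁ t - y₂ t with hu
  set v : ℝ → ℝ := fun t => ζ₁ t - ζ₂ t with hv
  set φ : ℝ → ℝ := fun t => v t ^ 2 - u t ^ 2 with hφ
  set φ' : ℝ → ℝ := fun t =>
    2 * v t * (α * v t + (f₂ (y₁ t, ζ₁ t) - f₂ (y₂ t, ζ₂ t)))
    - 2 * u t * (β * u t + (f₁ (y₁ t, ζ₁ t) - f₁ (y₂ t, ζ₂ t))) with hφ'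
  have hd : ∀ t ∈ Set.Icc 0 T, HasDerivAt φ (φ' t) t := by
    intro t ht
    have hdu : HasDerivAt u (β * u t + (f₁ (y₁ t, ζ₁ t) - f₁ (y₂ t, ζ₂ t))) t := by
      have := (hy₁ t ht).sub (hy₂ t ht)
      exact this.congr_deriv (by ring)
    have hdv : HasDerivAt v (α * v t + (f₂ (y₁ t, ζ₁ t) - f₂ (y₂ t, ζ₂ t))) t := by
      have := (hζ₁ t ht).sub (hζ₂ t ht)
      exact this.congr_deriv (by ring)
    have := (hdv.mul hdv).sub (hdu.mul hdu)
    convert this using 1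
    · rfl
    · rfl
    · ext x; simp [hφ, sq]
    · simp [hφ']; ring
  have hbd : ∀ t ∈ Set.Icc 0 T, 0 ≤ φ t → φ' t ≤ (2 * α + 8 * ρ) * φ t := by
    intro t ht hφt
    have hg₁ : |f₁ (y₁ t, ζ₁ t) - f₁ (y₂ t, ζ₂ t)| ≤ ρ * (|u t| + |v t|) := by
      have := hf₁ (y₁ t, ζ₁ t) (y₂ t, ζ₂ t); simpa using this
    have hg₂ : |f₂ (y₁ t, ζ₁ t) - f₂ (y₂ t, ζ₂ t)| ≤ ρ * (|u t| + |v t|) := by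
      have := hf₂ (y₁ t, ζ₁ t) (y₂ t, ζ₂ t); simpa using this
    set g₁ := f₁ (y₁ t, ζ₁ t) - f₁ (y₂ t, ζ₂ t) with hg1d
    set g₂ := f₂ (y₁ t, ζ₁ t) - f₂ (y₂ t, ζ₂ t) with hg2d
    have hab : |u t| ≤ |v t| := by
      have h1 : u t ^ 2 ≤ v t ^ 2 := by simp only [hφ] at hφt; linarith
      nlinarith [sq_abs (u t), sq_abs (v t), abs_nonneg (u t), abs_nonneg (v t)]
    have h1 : v t * g₂ ≤ |v t| * (ρ * (|u t| + |v t|)) := by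
      calc v t * g₂ ≤ |v t * g₂| := le_abs_self _
        _ = |v t| * |g₂| := abs_mul _ _
        _ ≤ |v t| * (ρ * (|u t| + |v t|)) :=
            mul_le_mul_of_nonneg_left hg₂ (abs_nonneg _)
    have h2 : -(u t * g₁) ≤ |u t| * (ρ * (|u t| + |v t|)) := by
      calc -(u t * g₁) ≤ |u t * g₁| := neg_le_abs _
        _ = |u t| * |g₁| := abs_mul _ _
        _ ≤ |u t| * (ρ * (|u t| + |v t|)) :=
            mul_le_mul_of_nonneg_left hg₁ (abs_nonneg _)
    have hu2 : u t ^ 2 = |u t| ^ 2 := (sq_abs _).symm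
    have hv2 : v t ^ 2 = |v t| ^ 2 := (sq_abs _).symm
    simp only [hφ, hφ', ← hg1d, ← hg2d]
    nlinarith [mul_nonneg (mul_nonneg hρ.le (sub_nonneg.2 hab))
        (by positivity : (0:ℝ) ≤ 3 * |v t| + |u t|),
      mul_nonneg (sq_nonneg (u t)) (by linarith : (0:ℝ) ≤ β - α - 4 * ρ),
      abs_nonneg (u t), abs_nonneg (v t)]
  have h00 : φ 0 ≤ 0 := by
    have := pow_le_pow_left₀ (abs_nonneg _) h0 2
    simp only [sq_abs] at this
    simp only [hφ, hu, hv]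
    linarith
  have hout := nonpos_of_deriv_le_mul_of_nonneg hd h00 hbd
  intro t ht
  have := hout t ht
  simp only [hφ] at this
  rw [← Real.sqrt_sq_eq_abs, ← Real.sqrt_sq_eq_abs]
  exact Real.sqrt_le_sqrt (by simp only [hu, hv] at this ⊢; linarith)
end

section
/- Under the assumptions of the cone invariance lemma (0 < α < β, Lipschitz constant ρ with 4ρ < β - α), if additionally |Δy(t)| ≥ |Δζ(t)| holds for all t ∈ [0,T], then |Δy(t)| ≥ |Δy(0)| e^{(β - 2ρ)t} for all t ∈ [0,T]. -/
open Real Filter Set Topology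

theorem stmt18 (α β ρ T : ℝ) (hα : 0 < α) (hαβ : α < β) (hρ : 0 < ρ)
    (hρ4 : 4 * ρ < β - α)
    (f₁ f₂ : ℝ × ℝ → ℝ) (hf₁0 : f₁ (0, 0) = 0) (hf₂0 : f₂ (0, 0) = 0)
    (hf₁ : ∀ p q : ℝ × ℝ, |f₁ p - f₁ q| ≤ ρ * (|p.1 - q.1| + |p.2 - q.2|))
    (hf₂ : ∀ p q : ℝ × ℝ, |f₂ p - f₂ q| ≤ ρ * (|p.1 - q.1| + |p.2 - q.2|))
    (y₁ ζ₁ y₂ ζ₂ : ℝ → ℝ)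
    (hy₁ : ∀ t ∈ Set.Icc 0 T, HasDerivAt y₁ (β * y₁ t + f₁ (y₁ t, ζ₁ t)) t)
    (hζ₁ : ∀ t ∈ Set.Icc 0 T, HasDerivAt ζ₁ (α * ζ₁ t + f₂ (y₁ t, ζ₁ t)) t)
    (hy₂ : ∀ t ∈ Set.Icc 0 T, HasDerivAt y₂ (β * y₂ t + f₁ (y₂ t, ζ₂ t)) t)
    (hζ₂ : ∀ t ∈ Set.Icc 0 T, HasDerivAt ζ₂ (α * ζ₂ t + f₂ (y₂ t, ζ₂ t)) t)
    (hcone : ∀ t ∈ Set.Icc 0 T, |ζ₁ t - ζ₂ t| ≤ |y₁ t - y₂ t|) :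
    ∀ t ∈ Set.Icc 0 T,
      |y₁ 0 - y₂ 0| * Real.exp ((β - 2 * ρ) * t) ≤ |y₁ t - y₂ t| := by
  set η : ℝ := β - 2 * ρ with hη
  set g : ℝ → ℝ := fun s => y₁ s - y₂ s with hg
  set u : ℝ → ℝ := fun s => g s * g s * Real.exp (-(2 * η) * s) with hu
  have key : ∀ s ∈ Set.Icc 0 T, HasDerivAt u
      ((((β * y₁ s + f₁ (y₁ s, ζ₁ s)) - (β * y₂ s + f₁ (y₂ s, ζ₂ s))) * g s
        + g s * ((β * y₁ s + f₁ (y₁ s, ζ₁ s)) - (β * y₂ s + f₁ (y₂ s, ζ₂ s))))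
        * Real.exp (-(2 * η) * s)
        + g s * g s * (Real.exp (-(2 * η) * s) * (-(2 * η)))) s := by
    intro s hs
    have h1 : HasDerivAt g ((β * y₁ s + f₁ (y₁ s, ζ₁ s)) - (β * y₂ s + f₁ (y₂ s, ζ₂ s))) s :=
      (hy₁ s hs).sub (hy₂ s hs)
    have h2 : HasDerivAt (fun x : ℝ => Real.exp (-(2 * η) * x))
        (Real.exp (-(2 * η) * s) * (-(2 * η))) s := by
      simpa using ((hasDerivAt_id s).const_mul (-(2 * η))).exp
    exact ((h1.mul h1).mul h2)
  have hderiv_nonneg : ∀ s ∈ Set.Icc 0 T, 0 ≤ deriv u s := by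
    intro s hs
    rw [(key s hs).deriv]
    set D : ℝ := f₁ (y₁ s, ζ₁ s) - f₁ (y₂ s, ζ₂ s) with hD
    have habsD : |D| ≤ 2 * ρ * |g s| := by
      have h1 := hf₁ (y₁ s, ζ₁ s) (y₂ s, ζ₂ s)
      have h2 := hcone s hs
      simp only [hD] at *
      calc |f₁ (y₁ s, ζ₁ s) - f₁ (y₂ s, ζ₂ s)| ≤ ρ * (|y₁ s - y₂ s| + |ζ₁ s - ζ₂ s|) := h1
        _ ≤ ρ * (|y₁ s - y₂ s| + |y₁ s - y₂ s|) := by nlinarith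
        _ = 2 * ρ * |g s| := by ring
    have hgD : -(2 * ρ) * (g s * g s) ≤ g s * D := by
      have h3 : -(g s * D) ≤ |g s * D| := neg_le_abs _
      have h4 : |g s * D| = |g s| * |D| := abs_mul _ _
      have h5 : |g s| * |D| ≤ |g s| * (2 * ρ * |g s|) :=
        mul_le_mul_of_nonneg_left habsD (abs_nonneg _)
      have h6 : |g s| * |g s| = g s * g s := abs_mul_abs_self _
      nlinarith
    have hE : (0:ℝ) < Real.exp (-(2 * η) * s) := Real.exp_pos _
    have hinner : (0:ℝ) ≤ 2 * (g s * D) + 4 * ρ * (g s * g s) := by nlinarith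
    have hprod := mul_nonneg hE.le hinner
    have hexp : (β * y₁ s + f₁ (y₁ s, ζ₁ s)) - (β * y₂ s + f₁ (y₂ s, ζ₂ s))
        = β * g s + D := by simp only [hg, hD]; ring
    rw [hexp, hη]
    nlinarith [hprod]
  have hmono : MonotoneOn u (Set.Icc 0 T) := by
    apply monotoneOn_of_deriv_nonneg (convex_Icc 0 T)
    · exact fun s hs => ((key s hs).continuousAt).continuousWithinAt
    · intro s hs
      rw [interior_Icc] at hs
      exact ((key s (Set.Ioo_subset_Icc_self hs)).differentiableAt).differentiableWithinAt
    · intro s hs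
      rw [interior_Icc] at hs
      exact hderiv_nonneg s (Set.Ioo_subset_Icc_self hs)
  intro t ht
  have h0T : (0:ℝ) ≤ T := ht.1.trans ht.2
  have h0mem : (0:ℝ) ∈ Set.Icc (0:ℝ) T := ⟨le_refl 0, h0T⟩
  have hut := hmono h0mem ht ht.1
  have hu0 : u 0 = g 0 * g 0 := by simp [hu]
  have hEE : Real.exp (η * t) * Real.exp (η * t) = Real.exp ((2 * η) * t) := by
    rw [← Real.exp_add]; ring_nf
  have hE1 : Real.exp (-(2 * η) * t) * Real.exp ((2 * η) * t) = 1 := by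
    rw [← Real.exp_add]; ring_nf; exact Real.exp_zero
  have hsq : (|g 0| * Real.exp (η * t)) ^ 2 ≤ |g t| ^ 2 := by
    have h7 : g 0 * g 0 ≤ g t * g t * Real.exp (-(2 * η) * t) := by
      simpa [hu0, hu] using hut
    have h8 : |g 0| * |g 0| = g 0 * g 0 := abs_mul_abs_self _
    have h9 : |g t| * |g t| = g t * g t := abs_mul_abs_self _
    have hEpos := Real.exp_pos ((2 * η) * t)
    nlinarith [mul_le_mul_of_nonneg_right h7 hEpos.le]
  have := le_of_pow_le_pow_left₀ (two_ne_zero) (abs_nonneg (g t)) hsq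
  have hgoal : |y₁ 0 - y₂ 0| * Real.exp ((β - 2 * ρ) * t) ≤ |y₁ t - y₂ t| := by
    simpa [hg, hη] using this
  exact hgoal
end
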